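/- arXiv:1709.09396 — 3 statements merged into one kernel-verified Lean document; each statement's English description precedes it below -/
import Mathlib

section
/- Let T be a contraction on a Hilbert space H whose minimal unitary dilation has absolutely continuous scalar spectral measures; concretely, suppose for all f, g ∈ H there exists u_{f,g} ∈ L¹(𝕋) with ⟨Tⁿf, g⟩ = ∫_𝕋 zⁿ u_{f,g}(z) dm(z) for all n ≥ 0, where additionally ‖u_{f,g}‖_{L¹} ≤ ‖f‖‖g‖. Then for every function φ holomorphic on a neighborhood of the closed unit disc with Taylor series φ(z) = Σ aₙ zⁿ, the operator φ̃(T) := Σ conj(aₙ) Tⁿ satisfies ‖φ̃(T)f‖ ≤ ‖φ‖_∞ ‖f‖ for all f ∈ H, where ‖φ‖_∞ = sup_{|z|≤1} |φ(z)|. -/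
open Metric MeasureTheory

/-- a contraction whose minimal unitary dilation has absolutely
continuous scalar spectral measures satisfies the von Neumann-type inequality
`‖φ̃(T)f‖ ≤ ‖φ‖_∞ ‖f‖` for `φ̃(T) = Σ conj(aₙ) Tⁿ`, with `φ` holomorphic on a
neighborhood of the closed unit disc with Taylor coefficients `aₙ`. -/
theorem stmt7
    {H : Type*}
    [NormedAddCommGroup H] [InnerProductSpace ℂ H] [CompleteSpace H]
    (T : H →L[ℂ] H) (hT : ‖T‖ ≤ 1)
    -- densities of the scalar spectral measures (parametrized on [0, 2π])
    (u : H → H → ℝ → ℂ)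
    (hu_int : ∀ f g : H,
      IntervalIntegrable (u f g) MeasureTheory.volume 0 (2*Real.pi))
    (hu_rep : ∀ (f g : H) (n : ℕ), (inner ℂ g ((T^n) f) : ℂ) =
      (2*Real.pi : ℝ)⁻¹ • ∫ θ in (0:ℝ)..(2*Real.pi),
        Complex.exp ((θ:ℂ) * Complex.I)^n * u f g θ)
    (hu_norm : ∀ f g : H,
      (2*Real.pi)⁻¹ * (∫ θ in (0:ℝ)..(2*Real.pi), ‖u f g θ‖) ≤ ‖f‖ * ‖g‖)
    -- φ is holomorphic on a disc of radius R > 1, with Taylor coefficients a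
    (φ : ℂ → ℂ) (R : ℝ) (hR : 1 < R)
    (hφ : DifferentiableOn ℂ φ (ball (0:ℂ) R))
    (a : ℕ → ℂ) (ha : ∀ z : ℂ, ‖z‖ < R → HasSum (fun n => a n * z^n) (φ z))
    -- S = φ̃(T) = Σ conj(aₙ) Tⁿ
    (S : H →L[ℂ] H)
    (hS : ∀ f : H, HasSum (fun n => (starRingEnd ℂ) (a n) • (T^n) f) (S f)) :
    ∀ f : H, ‖S f‖ ≤ (⨆ z : closedBall (0:ℂ) 1, ‖φ z‖) * ‖f‖ := by
  intro f
  set M : ℝ := ⨆ z : closedBall (0:ℂ) 1, ‖φ z‖ with hMdef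
  -- the sup bound
  have hsub : closedBall (0:ℂ) 1 ⊆ ball (0:ℂ) R :=
    closedBall_subset_ball (by simpa using hR)
  have hcont : ContinuousOn φ (closedBall (0:ℂ) 1) := hφ.continuousOn.mono hsub
  obtain ⟨C0, hC0⟩ := (isCompact_closedBall (0:ℂ) 1).exists_bound_of_continuousOn hcont
  have hbdd : BddAbove (Set.range fun z : closedBall (0:ℂ) 1 => ‖φ z‖) := by
    refine ⟨C0, ?_⟩
    rintro x ⟨z, rfl⟩
    exact hC0 z z.2
  have hMz : ∀ z : ℂ, ‖z‖ ≤ 1 → ‖φ z‖ ≤ M := by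
    intro z hz
    exact le_ciSup hbdd (⟨z, by simpa using hz⟩ : closedBall (0:ℂ) 1)
  have hM0 : 0 ≤ M := le_trans (norm_nonneg _) (hMz 0 (by simp))
  -- summability of ‖a n‖
  set t : ℝ := (1 + R) / 2 with htdef
  have ht1 : 1 < t := by rw [htdef]; linarith
  have htR : t < R := by rw [htdef]; linarith
  have ht0 : 0 < t := by linarith
  have hsum : Summable (fun n => a n * (t:ℂ)^n) := by
    refine (ha (t:ℂ) ?_).summable
    simpa [Complex.norm_real, abs_of_pos ht0] using htR
  obtain ⟨C, hC⟩ := hsum.tendsto_atTop_zero.norm.bddAbove_range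
  have hCn : ∀ n : ℕ, ‖a n‖ * t^n ≤ C := by
    intro n
    have := hC ⟨n, rfl⟩
    simpa [norm_mul, Complex.norm_real, abs_of_pos ht0] using this
  have hA : Summable (fun n => ‖a n‖) := by
    have hti : t⁻¹ < 1 := by rw [inv_lt_one_iff₀]; right; exact ht1
    have hti0 : (0:ℝ) ≤ t⁻¹ := le_of_lt (inv_pos.mpr ht0)
    refine Summable.of_nonneg_of_le (fun n => norm_nonneg _) (fun n => ?_)
      ((summable_geometric_of_lt_one hti0 hti).mul_left C)
    have hpos : (0:ℝ) < t^n := by positivity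
    have h := (le_div_iff₀ hpos).mpr (hCn n)
    calc ‖a n‖ ≤ C / t^n := h
    _ = C * (t⁻¹)^n := by rw [div_eq_mul_inv, inv_pow]
  -- key inner product bound
  have key : ∀ g : H, ‖(inner ℂ g (S f) : ℂ)‖ ≤ M * (‖f‖ * ‖g‖) := by
    intro g
    have hle : (0:ℝ) ≤ 2 * Real.pi := by positivity
    set μ : Measure ℝ := volume.restrict (Set.Ioc (0:ℝ) (2*Real.pi)) with hμdef
    have hu_int' : Integrable (u f g) μ := (hu_int f g).1
    set F : ℕ → ℝ → ℂ := fun n θ =>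
      (starRingEnd ℂ) (a n) * ((Complex.exp ((θ:ℂ) * Complex.I))^n * u f g θ) with hFdef
    have hexp1 : ∀ (θ : ℝ) (n : ℕ), ‖(Complex.exp ((θ:ℂ) * Complex.I))^n‖ = 1 := by
      intro θ n
      simp [norm_pow, Complex.norm_exp_ofReal_mul_I]
    have hFnorm : ∀ n θ, ‖F n θ‖ = ‖a n‖ * ‖u f g θ‖ := by
      intro n θ
      simp [hFdef, norm_mul, hexp1]
    have hFint : ∀ n, Integrable (F n) μ := by
      intro n
      have hmul : Integrable (fun θ : ℝ =>
          ((starRingEnd ℂ) (a n) * (Complex.exp ((θ:ℂ) * Complex.I))^n) * u f g θ) μ := by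
        refine hu_int'.bdd_mul (c := ‖a n‖) ?_ (Filter.Eventually.of_forall fun θ => ?_)
        · exact (continuous_const.mul ((Complex.continuous_ofReal.mul continuous_const).cexp.pow n)).aestronglyMeasurable
        · simp [norm_mul, hexp1]
      refine hmul.congr ?_
      filter_upwards with θ
      simp only [hFdef, mul_assoc]
    have hInorm : ∀ n, ∫ θ, ‖F n θ‖ ∂μ = ‖a n‖ * ∫ θ, ‖u f g θ‖ ∂μ := by
      intro n
      simp only [hFnorm]
      exact integral_const_mul _ _
    have hFsum : Summable (fun n => ∫ θ, ‖F n θ‖ ∂μ) := by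
      simp only [hInorm]
      exact hA.mul_right _
    have hptwise : ∀ θ : ℝ, HasSum (fun n => F n θ)
        ((starRingEnd ℂ) (φ ((starRingEnd ℂ) (Complex.exp ((θ:ℂ) * Complex.I)))) * u f g θ) := by
      intro θ
      have hz : ‖(starRingEnd ℂ) (Complex.exp ((θ:ℂ) * Complex.I))‖ < R := by
        rw [RCLike.norm_conj]
        calc ‖Complex.exp ((θ:ℂ) * Complex.I)‖ = 1 := by
              simp [Complex.norm_exp_ofReal_mul_I]
        _ < R := hR
      have h1 := ha _ hz
      have h2 := h1.mapL Complex.conjCLE.toContinuousLinearMap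
      have h3 : HasSum (fun n => (starRingEnd ℂ) (a n) * (Complex.exp ((θ:ℂ) * Complex.I))^n)
          ((starRingEnd ℂ) (φ ((starRingEnd ℂ) (Complex.exp ((θ:ℂ) * Complex.I))))) := by
        convert h2 using 2 with n
        simp [Complex.conjCLE_apply, map_mul, map_pow, Complex.conj_conj]
        exact (Complex.conjCLE_apply _).symm
      simpa [hFdef, mul_assoc] using h3.mul_right (u f g θ)
    have hswap := hasSum_integral_of_summable_integral_norm (μ := μ) hFint hFsum
    have htsum_eq : ∀ θ : ℝ, (∑' n, F n θ) =
        (starRingEnd ℂ) (φ ((starRingEnd ℂ) (Complex.exp ((θ:ℂ) * Complex.I)))) * u f g θ :=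
      fun θ => (hptwise θ).tsum_eq
    simp only [htsum_eq] at hswap
    -- inner products as integrals
    have hgS : HasSum (fun n => (starRingEnd ℂ) (a n) * (inner ℂ g ((T^n) f) : ℂ))
        ((inner ℂ g (S f) : ℂ)) := by
      have h := (hS f).mapL (innerSL ℂ g)
      simpa [inner_smul_right] using h
    have hterm : ∀ n : ℕ, (starRingEnd ℂ) (a n) * (inner ℂ g ((T^n) f) : ℂ) =
        (2*Real.pi : ℝ)⁻¹ • ∫ θ, F n θ ∂μ := by
      intro n
      rw [hu_rep f g n, intervalIntegral.integral_of_le hle]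
      rw [mul_smul_comm]
      congr 1
      rw [← integral_const_mul]
    simp only [hterm] at hgS
    have hswap' := hswap.const_smul ((2*Real.pi : ℝ)⁻¹)
    have heq : (inner ℂ g (S f) : ℂ) = (2*Real.pi : ℝ)⁻¹ •
        ∫ θ, (starRingEnd ℂ) (φ ((starRingEnd ℂ) (Complex.exp ((θ:ℂ) * Complex.I)))) * u f g θ ∂μ :=
      hgS.unique hswap'
    -- now estimate
    rw [heq]
    have hπ : (0:ℝ) < (2*Real.pi)⁻¹ := by positivity
    rw [norm_smul, Real.norm_eq_abs, abs_of_pos hπ]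
    have hb1 : ‖∫ θ, (starRingEnd ℂ) (φ ((starRingEnd ℂ) (Complex.exp ((θ:ℂ) * Complex.I)))) * u f g θ ∂μ‖
        ≤ ∫ θ, M * ‖u f g θ‖ ∂μ := by
      refine le_trans (norm_integral_le_integral_norm _) ?_
      refine integral_mono_of_nonneg ?_ (hu_int'.norm.const_mul M) ?_
      · filter_upwards with θ; positivity
      · filter_upwards with θ
        rw [norm_mul, RCLike.norm_conj]
        refine mul_le_mul_of_nonneg_right ?_ (norm_nonneg _)
        refine hMz _ ?_
        rw [RCLike.norm_conj]
        simp [Complex.norm_exp_ofReal_mul_I]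
    calc (2*Real.pi)⁻¹ * ‖∫ θ, (starRingEnd ℂ) (φ ((starRingEnd ℂ) (Complex.exp ((θ:ℂ) * Complex.I)))) * u f g θ ∂μ‖
        ≤ (2*Real.pi)⁻¹ * ∫ θ, M * ‖u f g θ‖ ∂μ := by
          exact mul_le_mul_of_nonneg_left hb1 (le_of_lt hπ)
      _ = M * ((2*Real.pi)⁻¹ * ∫ θ, ‖u f g θ‖ ∂μ) := by
          rw [integral_const_mul]; ring
      _ ≤ M * (‖f‖ * ‖g‖) := by
          refine mul_le_mul_of_nonneg_left ?_ hM0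
          have := hu_norm f g
          rwa [intervalIntegral.integral_of_le hle] at this
  -- conclude
  have h2 := key (S f)
  have hinner : ‖(inner ℂ (S f) (S f) : ℂ)‖ = ‖S f‖ * ‖S f‖ := by
    rw [inner_self_eq_norm_sq_to_K (𝕜 := ℂ) (S f)]
    simp [sq, Complex.norm_real]
  rcases eq_or_lt_of_le (norm_nonneg (S f)) with h0 | h0
  · rw [← h0]; positivity
  · rw [hinner] at h2
    have h3 : ‖S f‖ * ‖S f‖ ≤ (M * ‖f‖) * ‖S f‖ := by
      calc ‖S f‖ * ‖S f‖ ≤ M * (‖f‖ * ‖S f‖) := h2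
      _ = (M * ‖f‖) * ‖S f‖ := by ring
    exact le_of_mul_le_mul_right h3 h0
end

section
/- Let X₁, X₂, Y be Hilbert spaces and A : X₁ → Y, B : X₂ → Y bounded operators. Then the range spaces M(A) and M(B) coincide as sets with equal norms if and only if AA* = BB*. -/
open ContinuousLinearMap

open scoped InnerProductSpace ComplexConjugate

/-- The range norm on `M(T) = range T`. -/
noncomputable def rangeNorm {X Y : Type*}
    [NormedAddCommGroup X] [InnerProductSpace ℂ X]
    [NormedAddCommGroup Y] [InnerProductSpace ℂ Y]
    (T : X →L[ℂ] Y) (y : Y) : ℝ :=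
  sInf {c : ℝ | ∃ x : X, T x = y ∧ ‖x‖ = c}

/-- Key lemma (Hahn–Banach / Riesz): if `|⟪y,z⟫| ≤ c‖A*z‖` for all `z`, then `y = A x`
for some `x` with `‖x‖ ≤ c`. -/
lemma key_lemma {X Y : Type*}
    [NormedAddCommGroup X] [InnerProductSpace ℂ X] [CompleteSpace X]
    [NormedAddCommGroup Y] [InnerProductSpace ℂ Y] [CompleteSpace Y]
    (A : X →L[ℂ] Y) (y : Y) (c : ℝ) (hc : 0 ≤ c)
    (hb : ∀ z : Y, ‖(⟪y, z⟫_ℂ)‖ ≤ c * ‖adjoint A z‖) :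
    ∃ x : X, A x = y ∧ ‖x‖ ≤ c := by
  set L : Y →ₗ[ℂ] X := (adjoint A).toLinearMap with hLdef
  have hker : LinearMap.ker L ≤ LinearMap.ker ((innerSL ℂ y).toLinearMap) := by
    intro z hz
    have hz' : adjoint A z = 0 := hz
    have h0 := hb z
    rw [hz', norm_zero, mul_zero] at h0
    have : (⟪y, z⟫_ℂ) = 0 := norm_le_zero_iff.mp h0
    simpa [LinearMap.mem_ker] using this
  set f₀ : (Y ⧸ LinearMap.ker L) →ₗ[ℂ] ℂ :=
    (LinearMap.ker L).liftQ ((innerSL ℂ y).toLinearMap) hker with hf₀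
  set e := L.quotKerEquivRange with he
  set f : LinearMap.range L →ₗ[ℂ] ℂ := f₀ ∘ₗ (e.symm : LinearMap.range L →ₗ[ℂ] _) with hf
  have hfz : ∀ z : Y, f ⟨L z, LinearMap.mem_range_self L z⟩ = (⟪y, z⟫_ℂ) := by
    intro z
    have hee : e (Submodule.Quotient.mk z) = ⟨L z, LinearMap.mem_range_self L z⟩ :=
      Subtype.ext (L.quotKerEquivRange_apply_mk z)
    have hsym : e.symm ⟨L z, LinearMap.mem_range_self L z⟩ = Submodule.Quotient.mk z := by
      rw [LinearEquiv.symm_apply_eq, hee]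
    simp only [hf, LinearMap.comp_apply, LinearEquiv.coe_coe, hsym, hf₀,
      Submodule.liftQ_apply, ContinuousLinearMap.coe_coe, innerSL_apply_apply]
  have hbound : ∀ u : LinearMap.range L, ‖f u‖ ≤ c * ‖u‖ := by
    rintro ⟨u, hu⟩
    obtain ⟨z, rfl⟩ := hu
    rw [hfz z]
    simpa [hLdef] using hb z
  set fc : LinearMap.range L →L[ℂ] ℂ := LinearMap.mkContinuous f c hbound with hfc
  obtain ⟨g, hg, hgnorm⟩ := exists_extension_norm_eq (LinearMap.range L) fc
  have hgle : ‖g‖ ≤ c := by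
    rw [hgnorm]; exact LinearMap.mkContinuous_norm_le f hc hbound
  set x := (InnerProductSpace.toDual ℂ X).symm g with hx
  have hxv : ∀ v : X, (⟪x, v⟫_ℂ) = g v := fun v => InnerProductSpace.toDual_symm_apply
  refine ⟨x, ?_, ?_⟩
  · apply ext_inner_right ℂ
    intro z
    have h1 : (⟪A x, z⟫_ℂ) = ⟪x, adjoint A z⟫_ℂ := (adjoint_inner_right A x z).symm
    have h2 : g (adjoint A z) = f ⟨L z, LinearMap.mem_range_self L z⟩ :=
      hg ⟨L z, LinearMap.mem_range_self L z⟩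
    rw [h1, hxv, h2, hfz]
  · calc ‖x‖ = ‖g‖ := (InnerProductSpace.toDual ℂ X).symm.norm_map g
    _ ≤ c := hgle

/-- From `AA* = BB*` we get equality of adjoint norms. -/
lemma adj_norm_eq {X₁ X₂ Y : Type*}
    [NormedAddCommGroup X₁] [InnerProductSpace ℂ X₁] [CompleteSpace X₁]
    [NormedAddCommGroup X₂] [InnerProductSpace ℂ X₂] [CompleteSpace X₂]
    [NormedAddCommGroup Y] [InnerProductSpace ℂ Y] [CompleteSpace Y]
    (A : X₁ →L[ℂ] Y) (B : X₂ →L[ℂ] Y)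
    (h : A ∘L adjoint A = B ∘L adjoint B) (z : Y) :
    ‖adjoint A z‖ = ‖adjoint B z‖ := by
  have hA : ((‖adjoint A z‖ : ℂ)) ^ 2 = ⟪(A ∘L adjoint A) z, z⟫_ℂ := by
    rw [ContinuousLinearMap.comp_apply, ← adjoint_inner_right A (adjoint A z) z]
    exact (inner_self_eq_norm_sq_to_K (𝕜 := ℂ) (adjoint A z)).symm
  have hB : ((‖adjoint B z‖ : ℂ)) ^ 2 = ⟪(B ∘L adjoint B) z, z⟫_ℂ := by
    rw [ContinuousLinearMap.comp_apply, ← adjoint_inner_right B (adjoint B z) z]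
    exact (inner_self_eq_norm_sq_to_K (𝕜 := ℂ) (adjoint B z)).symm
  have : ((‖adjoint A z‖ : ℂ)) ^ 2 = ((‖adjoint B z‖ : ℂ)) ^ 2 := by rw [hA, hB, h]
  have h2 : ‖adjoint A z‖ ^ 2 = ‖adjoint B z‖ ^ 2 := by
    exact_mod_cast this
  nlinarith [norm_nonneg (adjoint A z), norm_nonneg (adjoint B z)]

/-- Transfer of preimages with norm control, from `‖A*z‖ = ‖B*z‖`. -/
lemma transfer {X₁ X₂ Y : Type*}
    [NormedAddCommGroup X₁] [InnerProductSpace ℂ X₁] [CompleteSpace X₁]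
    [NormedAddCommGroup X₂] [InnerProductSpace ℂ X₂] [CompleteSpace X₂]
    [NormedAddCommGroup Y] [InnerProductSpace ℂ Y] [CompleteSpace Y]
    (A : X₁ →L[ℂ] Y) (B : X₂ →L[ℂ] Y)
    (h : ∀ z : Y, ‖adjoint A z‖ = ‖adjoint B z‖) (x₂ : X₂) :
    ∃ x₁ : X₁, A x₁ = B x₂ ∧ ‖x₁‖ ≤ ‖x₂‖ := by
  apply key_lemma A (B x₂) ‖x₂‖ (norm_nonneg _)
  intro z
  have h1 : (⟪B x₂, z⟫_ℂ) = ⟪x₂, adjoint B z⟫_ℂ := (adjoint_inner_right B x₂ z).symm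
  rw [h1]
  calc ‖(⟪x₂, adjoint B z⟫_ℂ)‖ ≤ ‖x₂‖ * ‖adjoint B z‖ := norm_inner_le_norm _ _
  _ = ‖x₂‖ * ‖adjoint A z‖ := by rw [h z]

/-- One inequality of adjoint norms from range inclusion and range-norm inequality. -/
lemma adj_le {X₁ X₂ Y : Type*}
    [NormedAddCommGroup X₁] [InnerProductSpace ℂ X₁] [CompleteSpace X₁]
    [NormedAddCommGroup X₂] [InnerProductSpace ℂ X₂] [CompleteSpace X₂]
    [NormedAddCommGroup Y] [InnerProductSpace ℂ Y] [CompleteSpace Y]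
    (A : X₁ →L[ℂ] Y) (B : X₂ →L[ℂ] Y)
    (hr : LinearMap.range (B : X₂ →ₗ[ℂ] Y) ≤ LinearMap.range (A : X₁ →ₗ[ℂ] Y))
    (hn : ∀ y : Y, rangeNorm A y ≤ rangeNorm B y) (z : Y) :
    ‖adjoint B z‖ ≤ ‖adjoint A z‖ := by
  set v := adjoint B z with hv
  by_cases hv0 : ‖v‖ = 0
  · rw [hv0]; exact norm_nonneg _
  have hvpos : 0 < ‖v‖ := lt_of_le_of_ne (norm_nonneg v) (Ne.symm hv0)
  -- for every ε > 0, find a good preimage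
  have hkey : ∀ ε : ℝ, 0 < ε → ‖v‖ ^ 2 ≤ ‖adjoint A z‖ * (‖v‖ + ε) := by
    intro ε hε
    set y := B v with hy
    have hyA : y ∈ LinearMap.range (A : X₁ →ₗ[ℂ] Y) := hr ⟨v, rfl⟩
    have hSA : {c : ℝ | ∃ x : X₁, A x = y ∧ ‖x‖ = c}.Nonempty := by
      obtain ⟨x, hx⟩ := hyA
      exact ⟨‖x‖, x, hx, rfl⟩
    have hbdd : BddBelow {c : ℝ | ∃ x : X₂, B x = y ∧ ‖x‖ = c} :=
      ⟨0, by rintro c ⟨x, _, rfl⟩; exact norm_nonneg x⟩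
    have hBle : rangeNorm B y ≤ ‖v‖ := csInf_le hbdd ⟨v, rfl, rfl⟩
    have hAle : rangeNorm A y ≤ ‖v‖ := (hn y).trans hBle
    have hlt : rangeNorm A y < ‖v‖ + ε := lt_of_le_of_lt hAle (by linarith)
    obtain ⟨c, ⟨x₁, hx₁, rfl⟩, hclt⟩ := exists_lt_of_csInf_lt hSA hlt
    have h1 : ‖v‖ ^ 2 = ‖(⟪z, y⟫_ℂ)‖ := by
      have : (⟪z, y⟫_ℂ) = ⟪v, v⟫_ℂ := by
        rw [hy, ← adjoint_inner_left B v z]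
      rw [this, inner_self_eq_norm_sq_to_K]
      simp [norm_pow]
    have h2 : (⟪z, y⟫_ℂ) = ⟪adjoint A z, x₁⟫_ℂ := by
      rw [← hx₁, ← adjoint_inner_left A x₁ z]
    calc ‖v‖ ^ 2 = ‖(⟪adjoint A z, x₁⟫_ℂ)‖ := by rw [h1, h2]
    _ ≤ ‖adjoint A z‖ * ‖x₁‖ := norm_inner_le_norm _ _
    _ ≤ ‖adjoint A z‖ * (‖v‖ + ε) :=
        mul_le_mul_of_nonneg_left hclt.le (norm_nonneg _)
  -- conclude
  refine le_of_forall_pos_le_add fun ε hε => ?_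
  have := hkey (ε * ‖v‖ / ‖adjoint A z‖ + 1) (by positivity)
  by_cases hA0 : ‖adjoint A z‖ = 0
  · exfalso
    rw [hA0, zero_mul] at this
    nlinarith
  have hApos : 0 < ‖adjoint A z‖ := lt_of_le_of_ne (norm_nonneg _) (Ne.symm hA0)
  -- ‖v‖^2 ≤ ‖A*z‖‖v‖ + ε‖v‖ + ‖A*z‖ ... need care; redo with exact δ
  have h2 := hkey (ε * ‖v‖ / ‖adjoint A z‖) (by positivity)
  have hmul : ‖adjoint A z‖ * (ε * ‖v‖ / ‖adjoint A z‖) = ε * ‖v‖ := by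
    field_simp
  rw [mul_add, hmul] at h2
  nlinarith

/-- Comparison of range norms from a transfer of preimages. -/
lemma rangeNorm_le {X₁ X₂ Y : Type*}
    [NormedAddCommGroup X₁] [InnerProductSpace ℂ X₁] [CompleteSpace X₁]
    [NormedAddCommGroup X₂] [InnerProductSpace ℂ X₂] [CompleteSpace X₂]
    [NormedAddCommGroup Y] [InnerProductSpace ℂ Y] [CompleteSpace Y]
    (A : X₁ →L[ℂ] Y) (B : X₂ →L[ℂ] Y)
    (ht : ∀ x₂ : X₂, ∃ x₁ : X₁, A x₁ = B x₂ ∧ ‖x₁‖ ≤ ‖x₂‖) (y : Y)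
    (hne : {c : ℝ | ∃ x : X₂, B x = y ∧ ‖x‖ = c}.Nonempty) :
    rangeNorm A y ≤ rangeNorm B y := by
  apply le_csInf hne
  rintro c ⟨x₂, hx₂, rfl⟩
  obtain ⟨x₁, hx₁, hle⟩ := ht x₂
  have hmem : ‖x₁‖ ∈ {c : ℝ | ∃ x : X₁, A x = y ∧ ‖x‖ = c} := ⟨x₁, by rw [hx₁, hx₂], rfl⟩
  have hbdd : BddBelow {c : ℝ | ∃ x : X₁, A x = y ∧ ‖x‖ = c} :=
    ⟨0, by rintro c ⟨x, _, rfl⟩; exact norm_nonneg x⟩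
  exact (csInf_le hbdd hmem).trans hle

/-- Douglas: `M(A) ≐ M(B)` (equal ranges with equal range norms)
if and only if `A A* = B B*`. -/
theorem stmt13 {X₁ X₂ Y : Type*}
    [NormedAddCommGroup X₁] [InnerProductSpace ℂ X₁] [CompleteSpace X₁]
    [NormedAddCommGroup X₂] [InnerProductSpace ℂ X₂] [CompleteSpace X₂]
    [NormedAddCommGroup Y] [InnerProductSpace ℂ Y] [CompleteSpace Y]
    (A : X₁ →L[ℂ] Y) (B : X₂ →L[ℂ] Y) :
    (LinearMap.range (A : X₁ →ₗ[ℂ] Y) = LinearMap.range (B : X₂ →ₗ[ℂ] Y) ∧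
      ∀ y : Y, rangeNorm A y = rangeNorm B y) ↔
    A ∘L adjoint A = B ∘L adjoint B := by
  constructor
  · rintro ⟨hr, hn⟩
    have hz : ∀ z : Y, ‖adjoint A z‖ = ‖adjoint B z‖ := fun z =>
      le_antisymm
        (adj_le B A (le_of_eq hr) (fun y => (hn y).ge) z)
        (adj_le A B (le_of_eq hr.symm) (fun y => (hn y).le) z)
    apply ContinuousLinearMap.coe_injective
    rw [← ext_inner_map (↑(A ∘L adjoint A) : Y →ₗ[ℂ] Y) (↑(B ∘L adjoint B))]
    intro x
    show (⟪(A ∘L adjoint A) x, x⟫_ℂ) = ⟪(B ∘L adjoint B) x, x⟫_ℂ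
    have hA : (⟪(A ∘L adjoint A) x, x⟫_ℂ) = ((‖adjoint A x‖ : ℂ)) ^ 2 := by
      rw [ContinuousLinearMap.comp_apply,
        ← adjoint_inner_right A (adjoint A x) x]
      exact inner_self_eq_norm_sq_to_K (𝕜 := ℂ) (adjoint A x)
    have hB : (⟪(B ∘L adjoint B) x, x⟫_ℂ) = ((‖adjoint B x‖ : ℂ)) ^ 2 := by
      rw [ContinuousLinearMap.comp_apply,
        ← adjoint_inner_right B (adjoint B x) x]
      exact inner_self_eq_norm_sq_to_K (𝕜 := ℂ) (adjoint B x)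
    rw [hA, hB, hz x]
  · intro h
    have hz : ∀ z : Y, ‖adjoint A z‖ = ‖adjoint B z‖ := adj_norm_eq A B h
    have htAB : ∀ x₂ : X₂, ∃ x₁ : X₁, A x₁ = B x₂ ∧ ‖x₁‖ ≤ ‖x₂‖ := transfer A B hz
    have htBA : ∀ x₁ : X₁, ∃ x₂ : X₂, B x₂ = A x₁ ∧ ‖x₂‖ ≤ ‖x₁‖ :=
      transfer B A (fun z => (hz z).symm)
    constructor
    · ext y
      constructor
      · rintro ⟨x₁, rfl⟩
        obtain ⟨x₂, hx₂, -⟩ := htBA x₁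
        exact ⟨x₂, hx₂⟩
      · rintro ⟨x₂, rfl⟩
        obtain ⟨x₁, hx₁, -⟩ := htAB x₂
        exact ⟨x₁, hx₁⟩
    · intro y
      by_cases hB : {c : ℝ | ∃ x : X₂, B x = y ∧ ‖x‖ = c}.Nonempty
      · have hA : {c : ℝ | ∃ x : X₁, A x = y ∧ ‖x‖ = c}.Nonempty := by
          obtain ⟨c, x₂, hx₂, rfl⟩ := hB
          obtain ⟨x₁, hx₁, -⟩ := htAB x₂
          exact ⟨‖x₁‖, x₁, by rw [hx₁, hx₂], rfl⟩
        exact le_antisymm (rangeNorm_le A B htAB y hB) (rangeNorm_le B A htBA y hA)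
      · have hA : ¬ {c : ℝ | ∃ x : X₁, A x = y ∧ ‖x‖ = c}.Nonempty := by
          rintro ⟨c, x₁, hx₁, rfl⟩
          obtain ⟨x₂, hx₂, -⟩ := htBA x₁
          exact hB ⟨‖x₂‖, x₂, by rw [hx₂, hx₁], rfl⟩
        rw [Set.not_nonempty_iff_eq_empty] at hA hB
        unfold rangeNorm
        rw [hA, hB]
end

section
/- Let A, B : X → Y and C : Y → Y be bounded operators between Hilbert spaces. Then C maps M(A) contractively into M(B) (i.e., C(range A) ⊆ range B and ‖Cf‖_{M(B)} ≤ ‖f‖_{M(A)} for all f ∈ M(A)) if and only if C A A* C* ≤ B B* as self-adjoint operators on Y. -/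
open ContinuousLinearMap

section DouglasHelpers

variable {X Y : Type*}
    [NormedAddCommGroup X] [InnerProductSpace ℂ X] [CompleteSpace X]
    [NormedAddCommGroup Y] [InnerProductSpace ℂ Y] [CompleteSpace Y]

lemma solveB (B : X →L[ℂ] Y) (z : Y) (c : ℝ) (hc : 0 ≤ c)
    (h : ∀ y : Y, ‖(inner ℂ z y : ℂ)‖ ≤ c * ‖adjoint B y‖) :
    ∃ w : X, B w = z ∧ ‖w‖ ≤ c := by
  set B' : Y →ₗ[ℂ] X := (adjoint B).toLinearMap with hB'
  set p : Submodule ℂ X := LinearMap.range B' with hp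
  set ℓ : Y →ₗ[ℂ] ℂ := (innerSL ℂ z).toLinearMap with hℓ
  have hker : LinearMap.ker B' ≤ LinearMap.ker ℓ := by
    intro y hy
    have hy' : adjoint B y = 0 := hy
    have := h y
    rw [hy'] at this
    simp only [norm_zero, mul_zero] at this
    have : ‖(inner ℂ z y : ℂ)‖ = 0 := le_antisymm this (norm_nonneg _)
    simpa [hℓ, norm_eq_zero] using this
  let f₀ : ↥p →ₗ[ℂ] ℂ :=
    (Submodule.liftQ _ ℓ hker).comp (B'.quotKerEquivRange.symm : ↥p →ₗ[ℂ] _)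
  have key : ∀ y : Y, f₀ ⟨B' y, LinearMap.mem_range_self _ y⟩ = (inner ℂ z y : ℂ) := by
    intro y
    have h1 : (⟨B' y, LinearMap.mem_range_self _ y⟩ : ↥p) =
        B'.quotKerEquivRange (Submodule.Quotient.mk y) := by
      apply Subtype.ext
      exact (B'.quotKerEquivRange_apply_mk y).symm
    simp only [f₀, LinearMap.comp_apply, h1, LinearEquiv.coe_coe,
      LinearEquiv.symm_apply_apply, Submodule.liftQ_apply]
    rfl
  have bound : ∀ u : ↥p, ‖f₀ u‖ ≤ c * ‖u‖ := by
    rintro ⟨u, hu⟩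
    obtain ⟨y, rfl⟩ := hu
    rw [key y]
    exact h y
  let f : ↥p →L[ℂ] ℂ := f₀.mkContinuous c bound
  have hfnorm : ‖f‖ ≤ c := f₀.mkContinuous_norm_le hc bound
  set K : Submodule ℂ X := p.topologicalClosure with hK
  haveI : CompleteSpace ↥K :=
    IsClosed.completeSpace_coe (hs := Submodule.isClosed_topologicalClosure p)
  let eL : ↥p →ₗ[ℂ] ↥K := Submodule.inclusion p.le_topologicalClosure
  have heL : ∀ u : ↥p, ‖eL u‖ = ‖u‖ := fun u => rfl
  let e : ↥p →L[ℂ] ↥K := eL.mkContinuous 1 (fun u => by rw [heL, one_mul])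
  have h_e : ∀ u : ↥p, ‖u‖ ≤ (1 : NNReal) * ‖e u‖ := by
    intro u
    have : e u = eL u := rfl
    rw [this, heL, NNReal.coe_one, one_mul]
  have hui : IsUniformInducing e :=
    (ContinuousLinearMap.isUniformEmbedding_of_bound e h_e).isUniformInducing
  have hdense : DenseRange e := by
    rw [DenseRange, Subtype.dense_iff]
    intro x hx
    have hx' : x ∈ closure (p : Set X) := hx
    have hsub : (p : Set X) ⊆ Subtype.val '' Set.range ⇑e :=
      fun v hv => ⟨e ⟨v, hv⟩, ⟨⟨v, hv⟩, rfl⟩, rfl⟩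
    exact closure_mono hsub hx'
  let F : ↥K →L[ℂ] ℂ := f.extend e
  have hFnorm : ‖F‖ ≤ c := by
    have h1 := f.opNorm_extend_le (e := e) hdense h_e
    calc ‖F‖ ≤ (1 : NNReal) * ‖f‖ := h1
    _ = ‖f‖ := by rw [NNReal.coe_one, one_mul]
    _ ≤ c := hfnorm
  let w₁ : ↥K := (InnerProductSpace.toDual ℂ ↥K).symm F
  refine ⟨(w₁ : X), ?_, ?_⟩
  · apply ext_inner_right ℂ
    intro y
    have h1 : (inner ℂ (B ↑w₁) y : ℂ) = inner ℂ (w₁ : X) (B' y) := by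
      rw [hB']
      exact (ContinuousLinearMap.adjoint_inner_right B _ _).symm
    have hmem : B' y ∈ K := p.le_topologicalClosure (LinearMap.mem_range_self _ y)
    have h2 : (inner ℂ (w₁ : X) (B' y) : ℂ) = inner ℂ w₁ (⟨B' y, hmem⟩ : ↥K) := rfl
    have h3 : (inner ℂ w₁ (⟨B' y, hmem⟩ : ↥K) : ℂ) = F ⟨B' y, hmem⟩ :=
      InnerProductSpace.toDual_symm_apply
    have h4 : (⟨B' y, hmem⟩ : ↥K) = e ⟨B' y, LinearMap.mem_range_self _ y⟩ := rfl
    have h5 : F (e ⟨B' y, LinearMap.mem_range_self _ y⟩) =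
        f ⟨B' y, LinearMap.mem_range_self _ y⟩ := f.extend_eq (e := e) hdense hui _
    rw [h1, h2, h3, h4, h5]
    exact key y
  · have : ‖(w₁ : X)‖ = ‖w₁‖ := rfl
    rw [this]
    have : ‖w₁‖ = ‖F‖ := LinearIsometryEquiv.norm_map _ _
    rw [this]
    exact hFnorm

lemma rangeNorm_le_s14 (T : X →L[ℂ] Y) {x : X} {y : Y} (h : T x = y) :
    rangeNorm T y ≤ ‖x‖ :=
  csInf_le ⟨0, fun _ ⟨x', _, hx'⟩ => hx' ▸ norm_nonneg x'⟩ ⟨x, h, rfl⟩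

lemma le_rangeNorm (T : X →L[ℂ] Y) {y : Y} {c : ℝ} (hy : y ∈ LinearMap.range (T : X →ₗ[ℂ] Y))
    (h : ∀ x : X, T x = y → c ≤ ‖x‖) : c ≤ rangeNorm T y := by
  obtain ⟨x₀, hx₀⟩ := hy
  exact le_csInf ⟨‖x₀‖, x₀, hx₀, rfl⟩ (fun b ⟨x, hx, hb⟩ => hb ▸ h x hx)

lemma dual_bound (B : X →L[ℂ] Y) (y z : Y) (hz : z ∈ LinearMap.range (B : X →ₗ[ℂ] Y)) :
    ‖(inner ℂ y z : ℂ)‖ ≤ ‖adjoint B y‖ * rangeNorm B z := by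
  rcases eq_or_lt_of_le (norm_nonneg (adjoint B y)) with h0 | h0
  · obtain ⟨w, rfl⟩ := hz
    have hBy : adjoint B y = 0 := by rwa [eq_comm, norm_eq_zero] at h0
    have : (inner ℂ y (B w) : ℂ) = inner ℂ (adjoint B y) w :=
      (ContinuousLinearMap.adjoint_inner_left B w y).symm
    change ‖inner ℂ y (B w)‖ ≤ _
    rw [this, hBy, inner_zero_left, norm_zero]
    simp
  · have hdiv : ‖(inner ℂ y z : ℂ)‖ / ‖adjoint B y‖ ≤ rangeNorm B z := by
      apply le_rangeNorm B hz
      intro x hx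
      rw [div_le_iff₀ h0]
      have : (inner ℂ y z : ℂ) = inner ℂ (adjoint B y) x := by
        rw [← hx]; exact (ContinuousLinearMap.adjoint_inner_left B x y).symm
      rw [this]
      calc ‖(inner ℂ (adjoint B y) x : ℂ)‖ ≤ ‖adjoint B y‖ * ‖x‖ := norm_inner_le_norm _ _
      _ = ‖x‖ * ‖adjoint B y‖ := mul_comm _ _
    calc ‖(inner ℂ y z : ℂ)‖ = ‖(inner ℂ y z : ℂ)‖ / ‖adjoint B y‖ * ‖adjoint B y‖ := by
          field_simp
    _ ≤ rangeNorm B z * ‖adjoint B y‖ := by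
          exact mul_le_mul_of_nonneg_right hdiv (le_of_lt h0)
    _ = ‖adjoint B y‖ * rangeNorm B z := mul_comm _ _

lemma lhs_eq (A : X →L[ℂ] Y) (C : Y →L[ℂ] Y) (y : Y) :
    (inner ℂ y ((C ∘L A ∘L adjoint A ∘L adjoint C) y) : ℂ).re =
      ‖adjoint A (adjoint C y)‖ ^ 2 := by
  have h1 : (inner ℂ y ((C ∘L A ∘L adjoint A ∘L adjoint C) y) : ℂ) =
      inner ℂ (adjoint A (adjoint C y)) (adjoint A (adjoint C y)) := by
    simp only [ContinuousLinearMap.comp_apply]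
    rw [← ContinuousLinearMap.adjoint_inner_left C,
        ← ContinuousLinearMap.adjoint_inner_left A]
  rw [h1, inner_self_eq_norm_sq_to_K]
  norm_cast

lemma rhs_eq (B : X →L[ℂ] Y) (y : Y) :
    (inner ℂ y ((B ∘L adjoint B) y) : ℂ).re = ‖adjoint B y‖ ^ 2 := by
  have h1 : (inner ℂ y ((B ∘L adjoint B) y) : ℂ) =
      inner ℂ (adjoint B y) (adjoint B y) := by
    simp only [ContinuousLinearMap.comp_apply]
    rw [← ContinuousLinearMap.adjoint_inner_left B]
  rw [h1, inner_self_eq_norm_sq_to_K]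
  norm_cast

end DouglasHelpers

/-- Douglas's criterion: `C` maps `M(A)` contractively into `M(B)`
if and only if `C A A* C* ≤ B B*`. -/
theorem stmt14 {X Y : Type*}
    [NormedAddCommGroup X] [InnerProductSpace ℂ X] [CompleteSpace X]
    [NormedAddCommGroup Y] [InnerProductSpace ℂ Y] [CompleteSpace Y]
    (A B : X →L[ℂ] Y) (C : Y →L[ℂ] Y) :
    (∀ y ∈ LinearMap.range (A : X →ₗ[ℂ] Y),
        C y ∈ LinearMap.range (B : X →ₗ[ℂ] Y) ∧ rangeNorm B (C y) ≤ rangeNorm A y) ↔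
    (∀ y : Y,
      (inner ℂ y ((C ∘L A ∘L adjoint A ∘L adjoint C) y) : ℂ).re ≤
      (inner ℂ y ((B ∘L adjoint B) y) : ℂ).re) := by
  constructor
  · intro H y
    rw [lhs_eq, rhs_eq]
    set x₀ := adjoint A (adjoint C y) with hx₀
    obtain ⟨hmem, hle⟩ := H (A x₀) (LinearMap.mem_range_self _ _)
    have hsq : ‖x₀‖ ^ 2 = (inner ℂ y (C (A x₀)) : ℂ).re := by
      have h1 : (inner ℂ y (C (A x₀)) : ℂ) = inner ℂ x₀ x₀ := by
        rw [← ContinuousLinearMap.adjoint_inner_left C,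
            ← ContinuousLinearMap.adjoint_inner_left A]
      rw [h1, inner_self_eq_norm_sq_to_K]
      norm_cast
    have h2 : (inner ℂ y (C (A x₀)) : ℂ).re ≤ ‖adjoint B y‖ * ‖x₀‖ := by
      calc (inner ℂ y (C (A x₀)) : ℂ).re ≤ ‖(inner ℂ y (C (A x₀)) : ℂ)‖ :=
            Complex.re_le_norm _
      _ ≤ ‖adjoint B y‖ * rangeNorm B (C (A x₀)) := dual_bound B y _ hmem
      _ ≤ ‖adjoint B y‖ * ‖x₀‖ := by
          exact mul_le_mul_of_nonneg_left
            (le_trans hle (rangeNorm_le_s14 A rfl)) (norm_nonneg _)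
    have h3 : ‖x₀‖ ^ 2 ≤ ‖adjoint B y‖ * ‖x₀‖ := le_trans (le_of_eq hsq) h2
    nlinarith [norm_nonneg x₀, norm_nonneg (adjoint B y),
      sq_nonneg (‖x₀‖ - ‖adjoint B y‖)]
  · intro H y hy
    have hnorm : ∀ u : Y, ‖adjoint A (adjoint C u)‖ ≤ ‖adjoint B u‖ := by
      intro u
      have h1 := H u
      rw [lhs_eq, rhs_eq] at h1
      rw [← Real.sqrt_sq (norm_nonneg (adjoint A (adjoint C u))),
          ← Real.sqrt_sq (norm_nonneg (adjoint B u))]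
      exact Real.sqrt_le_sqrt h1
    have hexists : ∀ x' : X, A x' = y → ∃ w : X, B w = C y ∧ ‖w‖ ≤ ‖x'‖ := by
      intro x' hx'
      apply solveB B (C y) ‖x'‖ (norm_nonneg _)
      intro u
      rw [norm_inner_symm]
      have h1 : (inner ℂ u (C y) : ℂ) = inner ℂ (adjoint A (adjoint C u)) x' := by
        rw [← hx', ← ContinuousLinearMap.adjoint_inner_left C,
            ← ContinuousLinearMap.adjoint_inner_left A]
      rw [h1]
      calc ‖(inner ℂ (adjoint A (adjoint C u)) x' : ℂ)‖
          ≤ ‖adjoint A (adjoint C u)‖ * ‖x'‖ := norm_inner_le_norm _ _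
      _ ≤ ‖adjoint B u‖ * ‖x'‖ :=
          mul_le_mul_of_nonneg_right (hnorm u) (norm_nonneg _)
      _ = ‖x'‖ * ‖adjoint B u‖ := mul_comm _ _
    obtain ⟨x, hx⟩ := hy
    constructor
    · obtain ⟨w, hw, _⟩ := hexists x hx
      exact ⟨w, hw⟩
    · have hne : {c : ℝ | ∃ x0 : X, A x0 = y ∧ ‖x0‖ = c}.Nonempty := ⟨‖x‖, x, hx, rfl⟩
      refine le_csInf hne ?_
      rintro b ⟨x', hx', rfl⟩
      obtain ⟨w, hw, hwle⟩ := hexists x' hx'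
      exact le_trans (rangeNorm_le_s14 B hw) hwle
end
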